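/- Let m = (m(n))_{n≥0} be a sequence of positive real numbers with m(0) = 1, let P(λ,ζ) be a complex polynomial of degree p ≥ 1 in λ, let D ⊂ ℂ be a disc centred at 0, let φ₀,…,φ_{p−1} be holomorphic on D, and let (uₙ)_{n≥0} be holomorphic functions on D. Then û(t,z) = Σ (uₙ(z)/m(n))tⁿ is a formal power series solution of the Cauchy problem P(∂_{m,t},∂_z)u = 0, ∂ʲ_{m,t}u(0,z) = φ_j(z) for j = 0,…,p−1, if and only if v̂(t,z) = Σ uₙ(z)tⁿ is a formal power series solution of the Cauchy problem P(∂_{𝟏,t},∂_z)v = 0, ∂ʲ_{𝟏,t}v(0,z) = φ_j(z) for j = 0,…,p−1. -/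
import Mathlib


noncomputable section

/-- The moment differentiation `∂_{m,t}` acting on the family of coefficient functions of a
series `Σ wₙ(z) tⁿ ∈ O(D)[[t]]`. -/
def Tmom (m : ℕ → ℝ) (w : ℕ → ℂ → ℂ) : ℕ → ℂ → ℂ :=
  fun n z => ((m (n + 1) / m n : ℝ) : ℂ) * w (n + 1) z

/-- The complex derivative `∂_z` applied coefficientwise to `Σ wₙ(z) tⁿ`. -/
def Zder (w : ℕ → ℂ → ℂ) : ℕ → ℂ → ℂ := fun n z => deriv (w n) z

/-- The action of `P(∂_{m,t}, ∂_z)` on `Σ wₙ(z)tⁿ`, where `P(λ,ζ) = Σ_{i,j} c_{ij} λ^i ζ^j`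
is encoded as a polynomial in `λ` (outer variable) with coefficients polynomials in `ζ`. -/
def PApply (m : ℕ → ℝ) (P : Polynomial (Polynomial ℂ)) (w : ℕ → ℂ → ℂ) : ℕ → ℂ → ℂ :=
  fun n z => ∑ i ∈ Finset.range (P.natDegree + 1),
    ∑ j ∈ Finset.range ((P.coeff i).natDegree + 1),
      (P.coeff i).coeff j * ((Tmom m)^[i] (Zder^[j] w)) n z

/-- `w` (the coefficients of `û = Σ wₙ(z)tⁿ`) is a formal power series solution of the Cauchy
problem `P(∂_{m,t},∂_z)u = 0`, `∂ʲ_{m,t}u(0,z) = φ_j(z)` (`j = 0,…,p-1`) on the disc `D_R`. -/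
def IsCauchySol (m : ℕ → ℝ) (P : Polynomial (Polynomial ℂ)) (R : ℝ) (p : ℕ)
    (φ : ℕ → ℂ → ℂ) (w : ℕ → ℂ → ℂ) : Prop :=
  (∀ n, ∀ z ∈ Metric.ball (0 : ℂ) R, PApply m P w n z = 0) ∧
  (∀ j < p, ∀ z ∈ Metric.ball (0 : ℂ) R, ((Tmom m)^[j] w) 0 z = φ j z)

lemma Tmom_one_iter (v : ℕ → ℂ → ℂ) (i : ℕ) :
    (Tmom (fun _ => 1))^[i] v = fun n z => v (n + i) z := by
  induction i with
  | zero => simp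
  | succ i ih =>
      rw [Function.iterate_succ_apply', ih]
      funext n z
      simp [Tmom, add_assoc, add_comm 1 i]

lemma Zder_scale (c : ℕ → ℂ) (v : ℕ → ℂ → ℂ) (j : ℕ) :
    Zder^[j] (fun n z => c n * v n z) = fun n z => c n * Zder^[j] v n z := by
  induction j with
  | zero => simp
  | succ j ih =>
      rw [Function.iterate_succ_apply', ih, Function.iterate_succ_apply']
      funext n z
      simp [Zder, deriv_const_mul_field]

lemma Tmom_scale (m : ℕ → ℝ) (hpos : ∀ n, 0 < m n) (v : ℕ → ℂ → ℂ) (i : ℕ) :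
    (Tmom m)^[i] (fun n z => ((m n : ℝ) : ℂ)⁻¹ * v n z)
      = fun n z => ((m n : ℝ) : ℂ)⁻¹ * v (n + i) z := by
  induction i with
  | zero => simp
  | succ i ih =>
      rw [Function.iterate_succ_apply', ih]
      funext n z
      have h1 : (m (n + 1) : ℂ) ≠ 0 := by
        exact_mod_cast (hpos (n + 1)).ne'
      have h2 : (m n : ℂ) ≠ 0 := by
        exact_mod_cast (hpos n).ne'
      simp only [Tmom]
      push_cast
      field_simp
      ring_nf

theorem stmt11 (m : ℕ → ℝ) (hpos : ∀ n, 0 < m n) (hm0 : m 0 = 1)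
    (P : Polynomial (Polynomial ℂ)) (p : ℕ) (hp : 1 ≤ p) (hdeg : P.natDegree = p)
    (R : ℝ) (hR : 0 < R)
    (φ : ℕ → ℂ → ℂ) (hφ : ∀ j < p, DifferentiableOn ℂ (φ j) (Metric.ball 0 R))
    (u : ℕ → ℂ → ℂ) (hu : ∀ n, DifferentiableOn ℂ (u n) (Metric.ball 0 R)) :
    IsCauchySol m P R p φ (fun n z => ((m n : ℝ) : ℂ)⁻¹ * u n z)
      ↔ IsCauchySol (fun _ => 1) P R p φ u := by
  have hmne : ∀ n, ((m n : ℝ) : ℂ) ≠ 0 := fun n => by exact_mod_cast (hpos n).ne'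
  have key : ∀ n z, PApply m P (fun n z => ((m n : ℝ) : ℂ)⁻¹ * u n z) n z
      = ((m n : ℝ) : ℂ)⁻¹ * PApply (fun _ => 1) P u n z := by
    intro n z
    simp only [PApply, Finset.mul_sum]
    refine Finset.sum_congr rfl fun i _ => Finset.sum_congr rfl fun j _ => ?_
    rw [Zder_scale, Tmom_scale m hpos, Tmom_one_iter]
    ring
  have key2 : ∀ j z, ((Tmom m)^[j] (fun n z => ((m n : ℝ) : ℂ)⁻¹ * u n z)) 0 z
      = ((Tmom (fun _ => 1))^[j] u) 0 z := by
    intro j z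
    rw [Tmom_scale m hpos, Tmom_one_iter]
    simp [hm0]
  constructor
  · rintro ⟨h1, h2⟩
    refine ⟨fun n z hz => ?_, fun j hj z hz => ?_⟩
    · have := h1 n z hz
      rw [key] at this
      exact (mul_eq_zero.mp this).resolve_left (by simpa using hmne n)
    · rw [← key2]; exact h2 j hj z hz
  · rintro ⟨h1, h2⟩
    refine ⟨fun n z hz => ?_, fun j hj z hz => ?_⟩
    · rw [key, h1 n z hz, mul_zero]
    · rw [key2]; exact h2 j hj z hz
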